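/- Let l₁, l₂ : (0,∞) → ℝ be measurable functions that are positive for t ≥ t₀ and satisfy l₁(t) + l₂(t) ≤ (2+ε)π for all t ≥ t₀, where ε > 0. If G ⊆ (t₀,∞) is a measurable set and π ∫_G dt/(t·l₁(t)) ≤ α ∫_G dt/t for some α ≥ 1/2, then π ∫_G dt/(t·l₂(t)) ≥ (α/((2+ε)α − 1)) ∫_G dt/t. -/

import Mathlib

open MeasureTheory Real

/-- Lemma 3 (Eremenko–Rossi): if `l₁, l₂` are positive measurable functions on `[t₀, ∞)` with
`l₁ + l₂ ≤ (2+ε)π` there, `G ⊆ (t₀, ∞)` is measurable and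
`π ∫_G dt/(t l₁ t) ≤ α ∫_G dt/t` with `α ≥ 1/2`, then
`π ∫_G dt/(t l₂ t) ≥ (α/((2+ε)α − 1)) ∫_G dt/t`. -/
theorem stmt_0 (t₀ ε α : ℝ) (hε : 0 < ε) (hα : 1 / 2 ≤ α)
    (l₁ l₂ : ℝ → ℝ) (hm₁ : Measurable l₁) (hm₂ : Measurable l₂)
    (hpos₁ : ∀ t, t₀ ≤ t → 0 < l₁ t) (hpos₂ : ∀ t, t₀ ≤ t → 0 < l₂ t)
    (hsum : ∀ t, t₀ ≤ t → l₁ t + l₂ t ≤ (2 + ε) * π)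
    (G : Set ℝ) (hG : MeasurableSet G) (hGsub : G ⊆ Set.Ioi t₀)
    (hyp : ENNReal.ofReal π * ∫⁻ t in G, ENNReal.ofReal (1 / (t * l₁ t)) ≤
        ENNReal.ofReal α * ∫⁻ t in G, ENNReal.ofReal (1 / t)) :
    ENNReal.ofReal π * ∫⁻ t in G, ENNReal.ofReal (1 / (t * l₂ t)) ≥
      ENNReal.ofReal (α / ((2 + ε) * α - 1)) * ∫⁻ t in G, ENNReal.ofReal (1 / t) := by
  have hπ : (0:ℝ) < π := Real.pi_pos
  have hα0 : (0:ℝ) < α := by linarith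
  set D : ℝ := (2 + ε) * α - 1 with hDdef
  have hD : 0 < D := by rw [hDdef]; nlinarith
  set c : ℝ := 1 / D ^ 2 with hcdef
  have hc : 0 < c := by positivity
  set I := ∫⁻ t in G, ENNReal.ofReal (1 / t) with hIdef
  set J₁ := ∫⁻ t in G, ENNReal.ofReal (1 / (t * l₁ t)) with hJ1def
  set J₂ := ∫⁻ t in G, ENNReal.ofReal (1 / (t * l₂ t)) with hJ2def
  -- real pointwise key inequality
  have key : ∀ a b : ℝ, 0 < a → 0 < b → a + b ≤ (2+ε)*π →
      α/D + c*α ≤ π/b + c*(π/a) := by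
    intro a b ha hb hab
    have hP : 0 < (2+ε)*π - a := by linarith
    have h1 : π/((2+ε)*π - a) ≤ π/b := by gcongr; linarith
    have h2 : α/D + c*α ≤ π/((2+ε)*π - a) + c*(π/a) := by
      have expand : π/((2+ε)*π - a) + c*(π/a) - (α/D + c*α)
          = ((2+ε)*(α*a - π)^2) / (((2+ε)*π - a) * a * D^2) := by
        rw [hcdef]; generalize hQ : (2+ε)*π - a = q at hP ⊢
        have hq : a = (2+ε)*π - q := by linarith
        field_simp; subst hq; rw [hDdef]; ring
      have hnn : 0 ≤ ((2+ε)*(α*a - π)^2) / (((2+ε)*π - a) * a * D^2) := by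
        apply div_nonneg <;> positivity
      linarith
    linarith
  -- pointwise ENNReal inequality on G
  have hpt : ∀ t ∈ G, ENNReal.ofReal (α/D + c*α) * ENNReal.ofReal (1/t)
      ≤ ENNReal.ofReal π * ENNReal.ofReal (1/(t * l₂ t))
        + ENNReal.ofReal (c*π) * ENNReal.ofReal (1/(t * l₁ t)) := by
    intro t ht
    have htt : t₀ < t := hGsub ht
    rcases le_or_gt t 0 with h0 | h0
    · have hz : ENNReal.ofReal (1/t) = 0 := by
        rw [ENNReal.ofReal_eq_zero]; exact one_div_nonpos.2 h0
      rw [hz, mul_zero]; exact zero_le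
    · have ha : 0 < l₁ t := hpos₁ t htt.le
      have hb : 0 < l₂ t := hpos₂ t htt.le
      have hab : l₁ t + l₂ t ≤ (2+ε)*π := hsum t htt.le
      have hkey := key (l₁ t) (l₂ t) ha hb hab
      rw [← ENNReal.ofReal_mul (by positivity : (0:ℝ) ≤ α/D + c*α),
          ← ENNReal.ofReal_mul hπ.le,
          ← ENNReal.ofReal_mul (by positivity : (0:ℝ) ≤ c*π),
          ← ENNReal.ofReal_add (by positivity) (by positivity)]
      apply ENNReal.ofReal_le_ofReal
      have e1 : π * (1/(t * l₂ t)) + c*π * (1/(t * l₁ t))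
          = (π/(l₂ t) + c*(π/(l₁ t))) * (1/t) := by
        field_simp
      rw [e1]
      exact mul_le_mul_of_nonneg_right hkey (by positivity)
  -- measurability
  have meas2 : Measurable (fun t => ENNReal.ofReal π * ENNReal.ofReal (1/(t * l₂ t))) := by
    apply Measurable.const_mul
    exact ENNReal.measurable_ofReal.comp (measurable_const.div (measurable_id.mul hm₂))
  have meas1 : Measurable (fun t => ENNReal.ofReal (c*π) * ENNReal.ofReal (1/(t * l₁ t))) := by
    apply Measurable.const_mul
    exact ENNReal.measurable_ofReal.comp (measurable_const.div (measurable_id.mul hm₁))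
  -- integrate the pointwise inequality
  have intA : ENNReal.ofReal (α/D + c*α) * I
      ≤ ENNReal.ofReal π * J₂ + ENNReal.ofReal (c*π) * J₁ := by
    calc ENNReal.ofReal (α/D + c*α) * I
        = ∫⁻ t in G, ENNReal.ofReal (α/D + c*α) * ENNReal.ofReal (1/t) :=
          (lintegral_const_mul' _ _ ENNReal.ofReal_ne_top).symm
      _ ≤ ∫⁻ t in G, (ENNReal.ofReal π * ENNReal.ofReal (1/(t * l₂ t))
            + ENNReal.ofReal (c*π) * ENNReal.ofReal (1/(t * l₁ t))) :=
          setLIntegral_mono' hG hpt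
      _ = ENNReal.ofReal π * J₂ + ENNReal.ofReal (c*π) * J₁ := by
          rw [lintegral_add_left meas2,
            lintegral_const_mul' _ _ ENNReal.ofReal_ne_top,
            lintegral_const_mul' _ _ ENNReal.ofReal_ne_top]
  have intB : ENNReal.ofReal (c*π) * J₁ ≤ ENNReal.ofReal (c*α) * I := by
    rw [ENNReal.ofReal_mul hc.le, ENNReal.ofReal_mul hc.le, mul_assoc, mul_assoc]
    exact mul_le_mul_right hyp _
  have intC : ENNReal.ofReal (α/D) * I + ENNReal.ofReal (c*α) * I
      ≤ ENNReal.ofReal π * J₂ + ENNReal.ofReal (c*α) * I := by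
    calc ENNReal.ofReal (α/D) * I + ENNReal.ofReal (c*α) * I
        = ENNReal.ofReal (α/D + c*α) * I := by
          rw [← add_mul, ← ENNReal.ofReal_add (by positivity) (by positivity)]
      _ ≤ ENNReal.ofReal π * J₂ + ENNReal.ofReal (c*π) * J₁ := intA
      _ ≤ ENNReal.ofReal π * J₂ + ENNReal.ofReal (c*α) * I := add_le_add_right intB _
  rw [ge_iff_le]
  by_cases hI : I = ⊤
  · -- show π * J₂ = ⊤
    have hlow : ∀ t ∈ G, ENNReal.ofReal (1/(2+ε)) * ENNReal.ofReal (1/t)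
        ≤ ENNReal.ofReal π * ENNReal.ofReal (1/(t * l₂ t)) := by
      intro t ht
      have htt : t₀ < t := hGsub ht
      rcases le_or_gt t 0 with h0 | h0
      · have hz : ENNReal.ofReal (1/t) = 0 := by
          rw [ENNReal.ofReal_eq_zero]; exact one_div_nonpos.2 h0
        rw [hz, mul_zero]; exact zero_le
      · have ha : 0 < l₁ t := hpos₁ t htt.le
        have hb : 0 < l₂ t := hpos₂ t htt.le
        have hab : l₁ t + l₂ t ≤ (2+ε)*π := hsum t htt.le
        rw [← ENNReal.ofReal_mul (by positivity : (0:ℝ) ≤ 1/(2+ε)),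
            ← ENNReal.ofReal_mul hπ.le]
        apply ENNReal.ofReal_le_ofReal
        have e1 : π * (1/(t * l₂ t)) = (π/(l₂ t)) * (1/t) := by
          field_simp
        rw [e1]
        apply mul_le_mul_of_nonneg_right _ (by positivity)
        rw [div_le_div_iff₀ (by linarith) hb]
        nlinarith
    have hlowI : ENNReal.ofReal (1/(2+ε)) * I ≤ ENNReal.ofReal π * J₂ := by
      calc ENNReal.ofReal (1/(2+ε)) * I
          = ∫⁻ t in G, ENNReal.ofReal (1/(2+ε)) * ENNReal.ofReal (1/t) :=
            (lintegral_const_mul' _ _ ENNReal.ofReal_ne_top).symm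
        _ ≤ ∫⁻ t in G, ENNReal.ofReal π * ENNReal.ofReal (1/(t * l₂ t)) :=
            setLIntegral_mono' hG hlow
        _ = ENNReal.ofReal π * J₂ := lintegral_const_mul' _ _ ENNReal.ofReal_ne_top
    have : ENNReal.ofReal π * J₂ = ⊤ := by
      rw [hI, ENNReal.mul_top] at hlowI
      · exact top_le_iff.1 hlowI
      · simp [ENNReal.ofReal_eq_zero]
        positivity
    rw [this]; exact le_top
  · have hfin : ENNReal.ofReal (c*α) * I ≠ ⊤ := ENNReal.mul_ne_top ENNReal.ofReal_ne_top hI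
    exact (ENNReal.add_le_add_iff_right hfin).1 intC
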